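/- Let α be an N×N complex matrix with spectrum in the open upper half plane, θ₁, θ₂ N×m matrices with α − α* = i(θ₁θ₁* + θ₂θ₂*), and assume {α, θ₁} is full range. Set Σ₀ = I_N and Λ_n = [(I_N + iα⁻¹)^n θ₁, (I_N − iα⁻¹)^n θ₂]. Then the matrices Σ_n defined by Σ_{n+1} = Σ_n + α⁻¹Σ_n(α*)⁻¹ + α⁻¹Λ_nJΛ_n*(α*)⁻¹ (with J = diag(I_m, −I_m)) are positive definite for all n ≥ 0 and satisfy αΣ_n − Σ_nα* = iΛ_nΛ_n*. -/

import Mathlib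

open Matrix
open scoped ComplexOrder

private lemma dotShift {n k : Type*} [Fintype n] [Fintype k]
    (M : Matrix n k ℂ) (z : n → ℂ) (w : k → ℂ) :
    star z ⬝ᵥ (M *ᵥ w) = star (Mᴴ *ᵥ z) ⬝ᵥ w := by
  rw [star_mulVec, conjTranspose_conjTranspose, dotProduct_mulVec]

private lemma quadSelf {n k : Type*} [Fintype n] [Fintype k]
    (M : Matrix n k ℂ) (z : n → ℂ) :
    star z ⬝ᵥ ((M * Mᴴ) *ᵥ z) = star (Mᴴ *ᵥ z) ⬝ᵥ (Mᴴ *ᵥ z) := by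
  rw [← mulVec_mulVec, dotShift]

private lemma posdef_conj {n : Type*} [Fintype n] [DecidableEq n]
    {A B : Matrix n n ℂ} (hA : A.PosDef) (hB : IsUnit B) :
    (B * A * Bᴴ).PosDef := by
  refine PosDef.of_dotProduct_mulVec_pos ?_ ?_
  · show (B * A * Bᴴ)ᴴ = B * A * Bᴴ
    simp [conjTranspose_mul, hA.1.eq, Matrix.mul_assoc]
  · intro x hx
    have hBH : IsUnit Bᴴ := by
      rw [Matrix.isUnit_iff_isUnit_det] at hB ⊢
      rw [det_conjTranspose]
      exact hB.star
    have hxB : Bᴴ *ᵥ x ≠ 0 := by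
      intro h
      exact hx (mulVec_injective_iff_isUnit.2 hBH (by simpa using h))
    have : star x ⬝ᵥ ((B * A * Bᴴ) *ᵥ x) = star (Bᴴ *ᵥ x) ⬝ᵥ (A *ᵥ (Bᴴ *ᵥ x)) := by
      rw [Matrix.mul_assoc, ← mulVec_mulVec, dotShift, ← mulVec_mulVec]
    rw [this]
    exact hA.dotProduct_mulVec_pos hxB

private lemma posdef_of_eigenvalues {n : Type*} [Fintype n] [DecidableEq n]
    {A : Matrix n n ℂ} (hA : A.IsHermitian) (h : ∀ i, 0 < hA.eigenvalues i) :
    A.PosDef := by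
  have hU : IsUnit (hA.eigenvectorUnitary : Matrix n n ℂ) := by
    have hmem := hA.eigenvectorUnitary.2
    rw [Unitary.mem_iff] at hmem
    exact ⟨⟨_, star (hA.eigenvectorUnitary : Matrix n n ℂ), hmem.2, hmem.1⟩, rfl⟩
  have hD : (Matrix.diagonal (RCLike.ofReal ∘ hA.eigenvalues) : Matrix n n ℂ).PosDef := by
    apply Matrix.PosDef.diagonal
    intro i
    simpa using Complex.zero_lt_real.2 (h i)
  have := posdef_conj hD hU
  rw [← Matrix.star_eq_conjTranspose] at this
  rw [hA.spectral_theorem]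
  exact this

private lemma posdef_aux {N m : ℕ}
    (α : Matrix (Fin N) (Fin N) ℂ)
    (θ₁ θ₂ : Matrix (Fin N) (Fin m) ℂ)
    (hid : α - αᴴ = Complex.I • (θ₁ * θ₁ᴴ + θ₂ * θ₂ᴴ))
    (hfr : Submodule.span ℂ
      {x : Fin N → ℂ | ∃ k < N, ∃ v : Fin m → ℂ, x = (α ^ k * θ₁) *ᵥ v} = ⊤)
    (G : Matrix (Fin N) (Fin N) ℂ) (hGα : α * G = G * α) (hG : IsUnit G)
    {ι : Type*} [Fintype ι]
    (L : Matrix (Fin N) ι ℂ)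
    (hL : ∀ z : Fin N → ℂ, Lᴴ *ᵥ z = 0 → θ₁ᴴ *ᵥ (Gᴴ *ᵥ z) = 0)
    (S : Matrix (Fin N) (Fin N) ℂ) (hherm : S.IsHermitian)
    (hlyap : α * S - S * αᴴ = Complex.I • (L * Lᴴ)) : S.PosDef := by
  apply posdef_of_eigenvalues hherm
  intro i
  by_contra hle
  push_neg at hle
  set t : ℝ := hherm.eigenvalues i with ht
  have hx0 := hherm.mulVec_eigenvectorBasis i
  set x : Fin N → ℂ := ⇑(hherm.eigenvectorBasis i) with hxdef
  have hx' : S *ᵥ x = (t : ℂ) • x := by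
    rw [hx0]; ext j; simp [Complex.real_smul, ht]
  have hxne : x ≠ 0 := by
    intro h
    exact hherm.eigenvectorBasis.orthonormal.ne_zero i (by ext j; exact congrFun h j)
  -- main step lemma
  have step : ∀ z : Fin N → ℂ, S *ᵥ z = (t : ℂ) • z →
      Lᴴ *ᵥ z = 0 ∧ S *ᵥ (αᴴ *ᵥ z) = (t : ℂ) • (αᴴ *ᵥ z) := by
    intro z hz
    set s₁ : ℂ := star (θ₁ᴴ *ᵥ z) ⬝ᵥ (θ₁ᴴ *ᵥ z) with hs₁
    set s₂ : ℂ := star (θ₂ᴴ *ᵥ z) ⬝ᵥ (θ₂ᴴ *ᵥ z) with hs₂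
    set r : ℂ := star (Lᴴ *ᵥ z) ⬝ᵥ (Lᴴ *ᵥ z) with hrr
    have e1 : star z ⬝ᵥ (α *ᵥ z) - star z ⬝ᵥ (αᴴ *ᵥ z) = Complex.I * (s₁ + s₂) := by
      have h := congrArg (fun M : Matrix (Fin N) (Fin N) ℂ => star z ⬝ᵥ (M *ᵥ z)) hid
      simpa [sub_mulVec, add_mulVec, dotProduct_sub, dotProduct_add, smul_mulVec,
        dotProduct_smul, smul_eq_mul, quadSelf, mul_add] using h
    have hA : star z ⬝ᵥ ((α * S) *ᵥ z) = (t : ℂ) * (star z ⬝ᵥ (α *ᵥ z)) := by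
      rw [← mulVec_mulVec, hz, mulVec_smul, dotProduct_smul, smul_eq_mul]
    have hB : star z ⬝ᵥ ((S * αᴴ) *ᵥ z) = (t : ℂ) * (star z ⬝ᵥ (αᴴ *ᵥ z)) := by
      rw [← mulVec_mulVec, dotShift, hherm.eq, hz, star_smul, smul_dotProduct]
      simp [Complex.conj_ofReal, smul_eq_mul]
    have e2 : (t : ℂ) * (star z ⬝ᵥ (α *ᵥ z)) - (t : ℂ) * (star z ⬝ᵥ (αᴴ *ᵥ z))
        = Complex.I * r := by
      have h := congrArg (fun M : Matrix (Fin N) (Fin N) ℂ => star z ⬝ᵥ (M *ᵥ z)) hlyap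
      simp only [sub_mulVec, dotProduct_sub, smul_mulVec, dotProduct_smul,
        smul_eq_mul] at h
      rw [hA, hB, quadSelf] at h
      exact h
    have e3 : r = (t : ℂ) * (s₁ + s₂) := by
      apply mul_left_cancel₀ Complex.I_ne_zero
      calc Complex.I * r = (t : ℂ) * (star z ⬝ᵥ (α *ᵥ z)) - (t : ℂ) * (star z ⬝ᵥ (αᴴ *ᵥ z)) :=
            e2.symm
        _ = (t : ℂ) * (star z ⬝ᵥ (α *ᵥ z) - star z ⬝ᵥ (αᴴ *ᵥ z)) := by ring
        _ = (t : ℂ) * (Complex.I * (s₁ + s₂)) := by rw [e1]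
        _ = Complex.I * ((t : ℂ) * (s₁ + s₂)) := by ring
    have hr0 : (0 : ℂ) ≤ r := dotProduct_star_self_nonneg _
    have hs10 : (0 : ℂ) ≤ s₁ := dotProduct_star_self_nonneg _
    have hs20 : (0 : ℂ) ≤ s₂ := dotProduct_star_self_nonneg _
    have ht0 : ((t : ℂ)) ≤ 0 := by
      rw [show (0 : ℂ) = ((0 : ℝ) : ℂ) by norm_num, Complex.real_le_real]
      exact hle
    have hrz : r = 0 := by
      refine le_antisymm ?_ hr0
      rw [e3]
      exact mul_nonpos_of_nonpos_of_nonneg ht0 (add_nonneg hs10 hs20)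
    have hL0 : Lᴴ *ᵥ z = 0 := dotProduct_star_self_eq_zero.mp hrz
    refine ⟨hL0, ?_⟩
    have hSα : S * αᴴ = α * S - Complex.I • (L * Lᴴ) := by
      rw [← hlyap, sub_sub_cancel]
    have hkey : S *ᵥ (αᴴ *ᵥ z) = (t : ℂ) • (α *ᵥ z) := by
      rw [mulVec_mulVec, hSα, sub_mulVec, smul_mulVec, ← mulVec_mulVec z L Lᴴ, hL0,
        mulVec_zero, smul_zero, sub_zero, ← mulVec_mulVec z α S, hz, mulVec_smul]
    rcases eq_or_lt_of_le hle with heq | hlt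
    · rw [hkey, heq]; simp
    · have htne : (t : ℂ) ≠ 0 := by
        simpa using Complex.ofReal_ne_zero.mpr hlt.ne
      have hss : s₁ + s₂ = 0 := by
        rcases mul_eq_zero.mp (hrz ▸ e3).symm with h | h
        · exact absurd h htne
        · exact h
      have hs1z : s₁ = 0 ∧ s₂ = 0 := (add_eq_zero_iff_of_nonneg hs10 hs20).mp hss
      have hθ1 : θ₁ᴴ *ᵥ z = 0 := dotProduct_star_self_eq_zero.mp hs1z.1
      have hθ2 : θ₂ᴴ *ᵥ z = 0 := dotProduct_star_self_eq_zero.mp hs1z.2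
      have hαz : α *ᵥ z = αᴴ *ᵥ z := by
        have h := congrArg (fun M : Matrix (Fin N) (Fin N) ℂ => M *ᵥ z) hid
        simp only [sub_mulVec, smul_mulVec, add_mulVec] at h
        rw [← mulVec_mulVec, ← mulVec_mulVec, hθ1, hθ2] at h
        simp only [mulVec_zero, add_zero, smul_zero] at h
        exact sub_eq_zero.mp h
      rw [hkey, hαz]
  -- iterate
  have hall : ∀ k : ℕ, S *ᵥ ((αᴴ) ^ k *ᵥ x) = (t : ℂ) • ((αᴴ) ^ k *ᵥ x) := by
    intro k
    induction k with
    | zero => simpa using hx'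
    | succ k ih =>
      rw [pow_succ', ← mulVec_mulVec]
      exact (step _ ih).2
  have hker : ∀ k : ℕ, θ₁ᴴ *ᵥ (Gᴴ *ᵥ ((αᴴ) ^ k *ᵥ x)) = 0 :=
    fun k => hL _ (step _ (hall k)).1
  have hcommk : ∀ k : ℕ, (αᴴ) ^ k * Gᴴ = Gᴴ * (αᴴ) ^ k := by
    intro k
    have h1 : Commute (Gᴴ) (αᴴ) := by
      show Gᴴ * αᴴ = αᴴ * Gᴴ
      rw [← conjTranspose_mul, ← conjTranspose_mul, hGα]
    exact ((h1.pow_right k).symm).eq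
  set u : Fin N → ℂ := Gᴴ *ᵥ x with hu
  have horth : ∀ w ∈ {w : Fin N → ℂ | ∃ k < N, ∃ v : Fin m → ℂ, w = (α ^ k * θ₁) *ᵥ v},
      w ⬝ᵥ star u = 0 := by
    rintro w ⟨k, hk, v, rfl⟩
    have h0 : (α ^ k * θ₁)ᴴ *ᵥ u = 0 := by
      rw [hu, conjTranspose_mul, conjTranspose_pow, mulVec_mulVec, Matrix.mul_assoc,
        hcommk, ← Matrix.mul_assoc, ← mulVec_mulVec, ← mulVec_mulVec]
      exact hker k
    calc ((α ^ k * θ₁) *ᵥ v) ⬝ᵥ star u = star u ⬝ᵥ ((α ^ k * θ₁) *ᵥ v) := dotProduct_comm _ _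
      _ = star ((α ^ k * θ₁)ᴴ *ᵥ u) ⬝ᵥ v := dotShift _ _ _
      _ = 0 := by rw [h0]; simp
  have hu0 : u = 0 := by
    let φ : (Fin N → ℂ) →ₗ[ℂ] ℂ :=
      { toFun := fun w => w ⬝ᵥ star u
        map_add' := fun a b => add_dotProduct _ _ _
        map_smul' := fun c a => by simp [smul_dotProduct] }
    have hspan : Submodule.span ℂ
        {w : Fin N → ℂ | ∃ k < N, ∃ v : Fin m → ℂ, w = (α ^ k * θ₁) *ᵥ v}
        ≤ LinearMap.ker φ := Submodule.span_le.mpr (fun w hw => horth w hw)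
    rw [hfr, top_le_iff] at hspan
    have : φ u = 0 := by
      rw [← LinearMap.mem_ker, hspan]; trivial
    exact dotProduct_self_star_eq_zero.mp this
  have hGH : IsUnit Gᴴ := by
    rw [Matrix.isUnit_iff_isUnit_det] at hG ⊢
    rw [det_conjTranspose]; exact hG.star
  exact hxne (mulVec_injective_iff_isUnit.2 hGH (by simpa using hu0))

theorem stmt7 {N m : ℕ}
    (α : Matrix (Fin N) (Fin N) ℂ)
    (hspec : ∀ μ ∈ spectrum ℂ α, 0 < μ.im)
    (θ₁ θ₂ : Matrix (Fin N) (Fin m) ℂ)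
    (hid : α - αᴴ = Complex.I • (θ₁ * θ₁ᴴ + θ₂ * θ₂ᴴ))
    (hfr : Submodule.span ℂ
      {x : Fin N → ℂ | ∃ k < N, ∃ v : Fin m → ℂ, x = (α ^ k * θ₁) *ᵥ v} = ⊤)
    (J : Matrix (Fin m ⊕ Fin m) (Fin m ⊕ Fin m) ℂ)
    (hJ : J = Matrix.fromBlocks 1 0 0 (-1))
    (Λ : ℕ → Matrix (Fin N) (Fin m ⊕ Fin m) ℂ)
    (hΛ : ∀ n, Λ n = Matrix.fromCols
      (((1 : Matrix (Fin N) (Fin N) ℂ) + Complex.I • α⁻¹) ^ n * θ₁)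
      (((1 : Matrix (Fin N) (Fin N) ℂ) - Complex.I • α⁻¹) ^ n * θ₂))
    (Sig : ℕ → Matrix (Fin N) (Fin N) ℂ)
    (hSig0 : Sig 0 = 1)
    (hSig : ∀ n, Sig (n + 1) =
      Sig n + α⁻¹ * Sig n * (αᴴ)⁻¹ + α⁻¹ * Λ n * J * (Λ n)ᴴ * (αᴴ)⁻¹) :
    ∀ n, (Sig n).PosDef ∧ α * Sig n - Sig n * αᴴ = Complex.I • (Λ n * (Λ n)ᴴ) := by
  -- invertibility of α
  have hdet : IsUnit α.det := by
    by_contra h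
    have h0 : (0 : ℂ) ∈ spectrum ℂ α :=
      (spectrum.zero_mem_iff ℂ).mpr (fun hu => h ((Matrix.isUnit_iff_isUnit_det α).mp hu))
    simpa using hspec 0 h0
  have hdetH : IsUnit (αᴴ).det := by
    rw [det_conjTranspose]; exact hdet.star
  haveI : Invertible α := α.invertibleOfIsUnitDet hdet
  haveI : Invertible (αᴴ) := (αᴴ).invertibleOfIsUnitDet hdetH
  set C : Matrix (Fin N) (Fin N) ℂ := 1 + Complex.I • α⁻¹ with hC
  set D : Matrix (Fin N) (Fin N) ℂ := 1 - Complex.I • α⁻¹ with hD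
  -- C is invertible
  have hCu : IsUnit C := by
    have hs : (-Complex.I) ∉ spectrum ℂ α := by
      intro hmem
      exact absurd (hspec _ hmem) (by norm_num)
    rw [spectrum.mem_iff, not_not] at hs
    have h2 : IsUnit (α + Complex.I • (1 : Matrix (Fin N) (Fin N) ℂ)) := by
      have heq : α + Complex.I • (1 : Matrix (Fin N) (Fin N) ℂ)
          = -(algebraMap ℂ (Matrix (Fin N) (Fin N) ℂ) (-Complex.I) - α) := by
        rw [Algebra.algebraMap_eq_smul_one]
        rw [neg_smul, neg_sub, sub_neg_eq_add]
      rw [heq]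
      exact hs.neg
    have hCeq : C = α⁻¹ * (α + Complex.I • (1 : Matrix (Fin N) (Fin N) ℂ)) := by
      rw [hC, Matrix.mul_add, mul_smul_comm, Matrix.mul_one, inv_mul_of_invertible]
    rw [hCeq]
    exact (isUnit_nonsing_inv_iff.mpr (isUnit_of_invertible α)).mul h2
  have hCα : α * C = C * α := by
    rw [hC, Matrix.mul_add, Matrix.add_mul, Matrix.mul_one, Matrix.one_mul, mul_smul_comm,
      smul_mul_assoc, mul_inv_of_invertible, inv_mul_of_invertible]
  have hCnα : ∀ n : ℕ, α * C ^ n = C ^ n * α := by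
    intro n
    exact ((Commute.pow_right (hCα) n)).eq
  -- conj transposes
  have hCH : Cᴴ = 1 - Complex.I • (αᴴ)⁻¹ := by
    rw [hC, conjTranspose_add, conjTranspose_smul, conjTranspose_one,
      conjTranspose_nonsing_inv]
    simp [sub_eq_add_neg, neg_smul]
  have hDH : Dᴴ = 1 + Complex.I • (αᴴ)⁻¹ := by
    rw [hD, conjTranspose_sub, conjTranspose_smul, conjTranspose_one,
      conjTranspose_nonsing_inv]
    simp [sub_eq_add_neg, neg_smul]
  have hJH : Jᴴ = J := by
    rw [hJ]
    simp [fromBlocks_conjTranspose]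
  -- key invariant
  have key : ∀ n, (Sig n).IsHermitian ∧
      α * Sig n - Sig n * αᴴ = Complex.I • (Λ n * (Λ n)ᴴ) := by
    intro n
    induction n with
    | zero =>
      constructor
      · rw [hSig0]; exact isHermitian_one
      · have hΛ0 : Λ 0 = fromCols θ₁ θ₂ := by
          rw [hΛ 0]; simp
        rw [hSig0, hΛ0, conjTranspose_fromCols_eq_fromRows_conjTranspose,
          fromCols_mul_fromRows, Matrix.mul_one, Matrix.one_mul]
        exact hid
    | succ n ih =>
      obtain ⟨ihH, ihL⟩ := ih
      have hLL : Λ n * (Λ n)ᴴ = (C ^ n * θ₁) * (C ^ n * θ₁)ᴴ + (D ^ n * θ₂) * (D ^ n * θ₂)ᴴ := by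
        rw [hΛ n, conjTranspose_fromCols_eq_fromRows_conjTranspose, fromCols_mul_fromRows]
      have hLJL : Λ n * J * (Λ n)ᴴ
          = (C ^ n * θ₁) * (C ^ n * θ₁)ᴴ - (D ^ n * θ₂) * (D ^ n * θ₂)ᴴ := by
        rw [hΛ n, hJ, fromCols_mul_fromBlocks,
          conjTranspose_fromCols_eq_fromRows_conjTranspose, fromCols_mul_fromRows]
        simp [sub_eq_add_neg]
      constructor
      · -- hermitian
        show (Sig (n+1))ᴴ = Sig (n+1)
        rw [hSig n]
        simp only [conjTranspose_add, conjTranspose_mul, conjTranspose_nonsing_inv,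
          conjTranspose_conjTranspose, ihH.eq, hJH]
        simp only [Matrix.mul_assoc]
      · -- Lyapunov
        set A := C ^ n * θ₁ with hA
        set B := D ^ n * θ₂ with hB
        have hp1 : C ^ (n+1) * θ₁ = C * A := by rw [hA, ← Matrix.mul_assoc, ← pow_succ']
        have hp2 : D ^ (n+1) * θ₂ = D * B := by rw [hB, ← Matrix.mul_assoc, ← pow_succ']
        have hΛ1 : Λ (n+1) * (Λ (n+1))ᴴ = C * A * (Aᴴ * Cᴴ) + D * B * (Bᴴ * Dᴴ) := by
          rw [hΛ (n+1), hp1, hp2, conjTranspose_fromCols_eq_fromRows_conjTranspose,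
            fromCols_mul_fromRows, conjTranspose_mul C A, conjTranspose_mul D B]
        have f1 : α * Sig n = Sig n * αᴴ + Complex.I • (A * Aᴴ + B * Bᴴ) := by
          rw [← hLL, ← ihL]; abel
        have f2 : Sig n * (αᴴ)⁻¹ = α⁻¹ * Sig n
            + Complex.I • (α⁻¹ * (A * (Aᴴ * (αᴴ)⁻¹)) + α⁻¹ * (B * (Bᴴ * (αᴴ)⁻¹))) := by
          have h := congrArg (fun M => α⁻¹ * M * (αᴴ)⁻¹) f1
          simp only [Matrix.mul_add, Matrix.add_mul, mul_smul_comm, smul_mul_assoc,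
            Matrix.mul_assoc] at h
          simp only [inv_mul_cancel_left_of_invertible, mul_inv_of_invertible,
            Matrix.mul_one] at h
          exact h
        rw [hSig n]
        rw [Matrix.mul_assoc α⁻¹ (Λ n) J, Matrix.mul_assoc α⁻¹ (Λ n * J) ((Λ n)ᴴ)]
        rw [show Λ n * J * (Λ n)ᴴ = A * Aᴴ - B * Bᴴ from hLJL]
        rw [hΛ1, hCH, hDH]
        simp only [hC, hD, Matrix.mul_add, Matrix.add_mul, Matrix.mul_sub, Matrix.sub_mul,
          Matrix.mul_smul, Matrix.smul_mul, smul_mul_assoc, mul_smul_comm, Matrix.mul_assoc,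
          smul_smul, Complex.I_mul_I, neg_smul, one_smul, Matrix.mul_one, Matrix.one_mul,
          smul_add, smul_sub, smul_neg, neg_neg,
          inv_mul_cancel_left_of_invertible, mul_inv_cancel_left_of_invertible,
          inv_mul_of_invertible, mul_inv_of_invertible]
        rw [f1, f2]
        simp only [hC, hD, Matrix.mul_add, Matrix.add_mul, Matrix.mul_sub, Matrix.sub_mul,
          Matrix.mul_smul, Matrix.smul_mul, smul_mul_assoc, mul_smul_comm, Matrix.mul_assoc,
          smul_smul, Complex.I_mul_I, neg_smul, one_smul, Matrix.mul_one, Matrix.one_mul,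
          smul_add, smul_sub, smul_neg, neg_neg,
          inv_mul_cancel_left_of_invertible, mul_inv_cancel_left_of_invertible,
          inv_mul_of_invertible, mul_inv_of_invertible]
        module
  intro n
  refine ⟨?_, (key n).2⟩
  -- positivity
  have hLker : ∀ z : Fin N → ℂ, (Λ n)ᴴ *ᵥ z = 0 → θ₁ᴴ *ᵥ ((C ^ n)ᴴ *ᵥ z) = 0 := by
    intro z hz
    rw [hΛ n, conjTranspose_fromCols_eq_fromRows_conjTranspose, fromRows_mulVec] at hz
    have h1 : (C ^ n * θ₁)ᴴ *ᵥ z = 0 := by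
      ext j
      have := congrFun hz (Sum.inl j)
      simpa using this
    rw [conjTranspose_mul, ← mulVec_mulVec] at h1
    exact h1
  exact posdef_aux α θ₁ θ₂ hid hfr (C ^ n) (hCnα n) (hCu.pow n) (Λ n) hLker (Sig n)
    (key n).1 (key n).2
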